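/- Let G be a finite group, A a normal subgroup of G such that G/A is cyclic. Then the number of subgroups of order p generated by elements of prime order p ≥ 5 lying in G \ A is at most ⌊log_5(|G/A|)⌋ · |A|. -/

import Mathlib

open Subgroup

lemma aux_sub_eq {G : Type*} [Group G] [Finite G] {H K : Subgroup G} (hle : H ≤ K)
    (hcard : Nat.card K ≤ Nat.card H) : H = K := by
  apply SetLike.coe_injective
  exact Set.eq_of_subset_of_ncard_le hle
    (by rwa [← Nat.card_coe_set_eq, ← Nat.card_coe_set_eq]) (Set.toFinite _)

lemma aux_mem {Q : Type*} [Group Q] [Finite Q] (g x : Q) (hg : ∀ q, q ∈ zpowers g)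
    {p : ℕ} (hp : p.Prime) (hx : orderOf x = p) :
    g ^ (Nat.card Q / p) ∈ zpowers x := by
  set n := Nat.card Q with hn
  have hn0 : n ≠ 0 := Nat.card_pos.ne'
  have hordg : orderOf g = n := orderOf_eq_card_of_forall_mem_zpowers hg
  have hpn : p ∣ n := hx ▸ orderOf_dvd_natCard x
  obtain ⟨m, hm⟩ := Submonoid.mem_powers_iff _ _ |>.mp (mem_powers_iff_mem_zpowers.mpr (hg x))
  have hgcd : n.gcd m = n / p := by
    have h1 : orderOf (g ^ m) = p := hm ▸ hx
    rw [orderOf_pow, hordg] at h1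
    have h2 : n.gcd m ∣ n := Nat.gcd_dvd_left _ _
    have h3 : n = n.gcd m * p := by rw [← h1]; exact (Nat.mul_div_cancel' h2).symm
    exact (Nat.div_eq_of_eq_mul_left hp.pos h3).symm
  obtain ⟨t, ht⟩ : n / p ∣ m := hgcd ▸ Nat.gcd_dvd_right n m
  have hxmem : x ∈ zpowers (g ^ (n / p)) :=
    mem_powers_iff_mem_zpowers.mp ⟨t, by simp only []; rw [← pow_mul, ← ht, hm]⟩
  have hle : zpowers x ≤ zpowers (g ^ (n / p)) := zpowers_le.mpr hxmem
  have hcards : Nat.card (zpowers (g ^ (n / p))) ≤ Nat.card (zpowers x) := by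
    rw [Nat.card_zpowers, Nat.card_zpowers, hx, orderOf_pow, hordg,
      Nat.gcd_eq_right (Nat.div_dvd_of_dvd hpn), Nat.div_div_self hpn hn0]
  have heq := aux_sub_eq hle hcards
  exact heq ▸ mem_zpowers _

lemma aux_ord_pow {Q : Type*} [Group Q] [Finite Q] (g : Q) (hg : ∀ q, q ∈ zpowers g)
    {p : ℕ} (hp : p.Prime) (hpn : p ∣ Nat.card Q) :
    orderOf (g ^ (Nat.card Q / p)) = p := by
  have hn0 : Nat.card Q ≠ 0 := Nat.card_pos.ne'
  rw [orderOf_pow, orderOf_eq_card_of_forall_mem_zpowers hg,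
    Nat.gcd_eq_right (Nat.div_dvd_of_dvd hpn), Nat.div_div_self hpn hn0]





/-- Lemma 2.6: if `A ⊴ G` with `G/A` cyclic, the number of subgroups `⟨x⟩`
generated by elements `x ∈ G \ A` of prime order `p ≥ 5` is at most
`⌊log_5 |G/A|⌋ · |A|`. -/
theorem stmt_0 {G : Type*} [Group G] [Fintype G] (A : Subgroup G) [A.Normal]
    (hcyc : IsCyclic (G ⧸ A)) :
    Nat.card {H : Subgroup G //
        ∃ x : G, x ∉ A ∧ (∃ p : ℕ, p.Prime ∧ 5 ≤ p ∧ orderOf x = p) ∧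
          H = Subgroup.zpowers x} ≤
      Nat.log 5 (Nat.card (G ⧸ A)) * Nat.card A := by
  classical
  set n := Nat.card (G ⧸ A) with hn
  have hn0 : n ≠ 0 := Nat.card_pos.ne'
  obtain ⟨g, hg⟩ := hcyc.exists_generator
  set π : G →* G ⧸ A := QuotientGroup.mk' A with hπ
  set y : G := (g : G ⧸ A).out with hydef
  have hy : π y = g := QuotientGroup.out_eq' g
  set S := {H : Subgroup G //
        ∃ x : G, x ∉ A ∧ (∃ p : ℕ, p.Prime ∧ 5 ≤ p ∧ orderOf x = p) ∧
          H = Subgroup.zpowers x} with hS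
  set P := {p : ℕ // p.Prime ∧ 5 ≤ p ∧ p ∣ n} with hP
  haveI hPfin : Finite P := by
    have : {p : ℕ | p.Prime ∧ 5 ≤ p ∧ p ∣ n}.Finite :=
      (Set.finite_Iic n).subset
        (fun p hp => Nat.le_of_dvd (Nat.pos_of_ne_zero hn0) hp.2.2)
    exact this
  have main : ∀ s : S, ∃ pa : P × A,
      (s : Subgroup G) = zpowers (y ^ (n / (pa.1 : ℕ)) * (pa.2 : G)) := by
    rintro ⟨H, x, hxA, ⟨p, hp, h5, hx⟩, hHs⟩
    have hxbar : orderOf (π x) = p := by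
      have hdvd : orderOf (π x) ∣ p := by
        apply orderOf_dvd_of_pow_eq_one
        rw [← map_pow, ← hx, pow_orderOf_eq_one, map_one]
      rcases (Nat.Prime.eq_one_or_self_of_dvd hp _ hdvd) with h1 | h1
      · exfalso
        apply hxA
        rw [orderOf_eq_one_iff] at h1
        exact (QuotientGroup.eq_one_iff x).mp h1
      · exact h1
    have hpn : p ∣ n := hxbar ▸ orderOf_dvd_natCard (π x)
    have hmem := aux_mem g (π x) hg hp hxbar
    obtain ⟨k, hk⟩ := (Submonoid.mem_powers_iff _ _).mp
      (mem_powers_iff_mem_zpowers.mpr hmem)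
    have hπh : π (x ^ k) = g ^ (n / p) := by rw [map_pow]; exact hk
    have hordgp : orderOf (g ^ (n / p)) = p := aux_ord_pow g hg hp hpn
    have hh1 : x ^ k ≠ 1 := by
      intro e
      rw [e, map_one] at hπh
      rw [← hπh, orderOf_one] at hordgp
      exact hp.one_lt.ne' hordgp.symm
    have hhm : x ^ k ∈ zpowers x := mem_powers_iff_mem_zpowers.mp ⟨k, rfl⟩
    have hordh : orderOf (x ^ k) = p := by
      rcases Nat.Prime.eq_one_or_self_of_dvd hp _
        (hx ▸ orderOf_dvd_of_mem_zpowers hhm) with h1 | h1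
      · exact absurd (orderOf_eq_one_iff.mp h1) hh1
      · exact h1
    have hz : zpowers (x ^ k) = zpowers x := by
      apply aux_sub_eq (zpowers_le.mpr hhm)
      rw [Nat.card_zpowers, Nat.card_zpowers, hordh, hx]
    have haA : (y ^ (n / p))⁻¹ * x ^ k ∈ A := by
      apply (QuotientGroup.eq_one_iff _).mp
      have : π ((y ^ (n / p))⁻¹ * x ^ k) = 1 := by
        rw [map_mul, map_inv, map_pow, hy, hπh, inv_mul_cancel]
      exact this
    refine ⟨⟨⟨p, hp, h5, hpn⟩, ⟨(y ^ (n / p))⁻¹ * x ^ k, haA⟩⟩, ?_⟩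
    simp only [hHs]
    rw [← hz]
    congr 1
    rw [mul_inv_cancel_left]
  have hFinj : Function.Injective (fun s : S => (main s).choose) := by
    intro s1 s2 h
    apply Subtype.ext
    rw [(main s1).choose_spec, (main s2).choose_spec]
    exact congrArg (fun pa : P × A => zpowers (y ^ (n / (pa.1 : ℕ)) * (pa.2 : G))) h
  have hSle : Nat.card S ≤ Nat.card (P × A) :=
    Nat.card_le_card_of_injective _ hFinj
  rw [Nat.card_prod] at hSle
  refine hSle.trans (Nat.mul_le_mul_right _ ?_)
  set Fs := n.primeFactors.filter (fun p => 5 ≤ p) with hFs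
  have h1 : Nat.card P ≤ Fs.card := by
    rw [← Nat.card_eq_finsetCard]
    refine Nat.card_le_card_of_injective
      (fun q => (⟨q.1, Finset.mem_filter.mpr
        ⟨Nat.mem_primeFactors.mpr ⟨q.2.1, q.2.2.2, hn0⟩, q.2.2.1⟩⟩ : {q // q ∈ Fs})) ?_
    intro a b hab
    simp only [Subtype.mk.injEq] at hab
    exact Subtype.ext hab
  have h2 : Fs.card ≤ Nat.log 5 n := by
    have hpow : 5 ^ Fs.card ≤ ∏ p ∈ Fs, p :=
      Finset.pow_card_le_prod _ _ _ (fun p hp => (Finset.mem_filter.mp hp).2)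
    have hdvd : (∏ p ∈ Fs, p) ∣ n :=
      dvd_trans (Finset.prod_dvd_prod_of_subset _ _ _ (Finset.filter_subset _ _))
        (Nat.prod_primeFactors_dvd n)
    exact (Nat.le_log_iff_pow_le (by norm_num) hn0).mpr
      (hpow.trans (Nat.le_of_dvd (Nat.pos_of_ne_zero hn0) hdvd))
  exact h1.trans h2
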